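/- There exists a function M̃ : ℝ → Mat_{2n}(ℂ) each of whose 4n² entry functions is real-analytic on all of ℝ, such that M̃(k) = M(k) for every real k ≠ 0. (The matrix M(k) extends analytically across k = 0, i.e. its entries have only removable singularities at the origin.) -/

import Mathlib

/-- hyperbolic cotangent, `coth x = cosh x / sinh x` (for `x ≠ 0`). -/
noncomputable def coth (x : ℝ) : ℝ := Real.cosh x / Real.sinh x

/-- hyperbolic cosecant, `csch x = 1 / sinh x` (for `x ≠ 0`). -/
noncomputable def csch (x : ℝ) : ℝ := 1 / Real.sinh x

/-- The symmetric tridiagonal matrix `A(k)` of the linearised fluid-loaded plate problem.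
Rows/columns are indexed by `i : Fin n`, corresponding to the 1-based index `i+1`; the plate
separations are `Δh 0, …, Δh n`.  The 1-based entries are
`A(k)_{ii} = (k + coth(kΔh_{i−1}) + coth(kΔhᵢ))/k` and
`A(k)_{i,i+1} = A(k)_{i+1,i} = −csch(kΔhᵢ)/k`. -/
noncomputable def Amat (n : ℕ) (Δh : ℕ → ℝ) (k : ℝ) : Matrix (Fin n) (Fin n) ℝ :=
  fun i j =>
    if (i : ℕ) = (j : ℕ) then (k + coth (k * Δh (i : ℕ)) + coth (k * Δh ((i : ℕ) + 1))) / k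
    else if (i : ℕ) + 1 = (j : ℕ) then -(csch (k * Δh ((i : ℕ) + 1)) / k)
    else if (j : ℕ) + 1 = (i : ℕ) then -(csch (k * Δh ((j : ℕ) + 1)) / k)
    else 0

/-- The symmetric tridiagonal matrix `B(k)`, with 1-based entries
`B(k)_{ii} = U_{i−1}² coth(kΔh_{i−1}) + Uᵢ² coth(kΔhᵢ)` and
`B(k)_{i,i+1} = B(k)_{i+1,i} = −Uᵢ² csch(kΔhᵢ)`. -/
noncomputable def Bmat (n : ℕ) (Δh U : ℕ → ℝ) (k : ℝ) : Matrix (Fin n) (Fin n) ℝ :=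
  fun i j =>
    if (i : ℕ) = (j : ℕ) then
      U (i : ℕ) ^ 2 * coth (k * Δh (i : ℕ)) + U ((i : ℕ) + 1) ^ 2 * coth (k * Δh ((i : ℕ) + 1))
    else if (i : ℕ) + 1 = (j : ℕ) then -(U ((i : ℕ) + 1) ^ 2 * csch (k * Δh ((i : ℕ) + 1)))
    else if (j : ℕ) + 1 = (i : ℕ) then -(U ((j : ℕ) + 1) ^ 2 * csch (k * Δh ((j : ℕ) + 1)))
    else 0

/-- The symmetric tridiagonal matrix `C(k)`, with 1-based entries
`C(k)_{ii} = U_{i−1} coth(kΔh_{i−1}) + Uᵢ coth(kΔhᵢ)` and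
`C(k)_{i,i+1} = C(k)_{i+1,i} = −Uᵢ csch(kΔhᵢ)`. -/
noncomputable def Cmat (n : ℕ) (Δh U : ℕ → ℝ) (k : ℝ) : Matrix (Fin n) (Fin n) ℝ :=
  fun i j =>
    if (i : ℕ) = (j : ℕ) then
      U (i : ℕ) * coth (k * Δh (i : ℕ)) + U ((i : ℕ) + 1) * coth (k * Δh ((i : ℕ) + 1))
    else if (i : ℕ) + 1 = (j : ℕ) then -(U ((i : ℕ) + 1) * csch (k * Δh ((i : ℕ) + 1)))
    else if (j : ℕ) + 1 = (i : ℕ) then -(U ((j : ℕ) + 1) * csch (k * Δh ((j : ℕ) + 1)))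
    else 0

/-- The complex `2n × 2n` block matrix
`M(k) = [[0, Iₙ], [A(k)⁻¹(k B(k) − k⁴ Iₙ), −2i A(k)⁻¹ C(k)]]`,
real matrices being regarded as complex. -/
noncomputable def Mmat (n : ℕ) (Δh U : ℕ → ℝ) (k : ℝ) :
    Matrix (Fin n ⊕ Fin n) (Fin n ⊕ Fin n) ℂ :=
  Matrix.fromBlocks 0 1
    (((Amat n Δh k)⁻¹ *
        (k • Bmat n Δh U k - k ^ 4 • (1 : Matrix (Fin n) (Fin n) ℝ))).map
      (fun x : ℝ => (x : ℂ)))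
    ((-2 * Complex.I) • ((Amat n Δh k)⁻¹ * Cmat n Δh U k).map (fun x : ℝ => (x : ℂ)))


/-- analytic extension of `sinh y / y`. -/
noncomputable def shc : ℝ → ℝ := dslope Real.sinh 0

lemma analyticAt_sinh' (x : ℝ) : AnalyticAt ℝ Real.sinh x := by
  have h : Real.sinh = fun y => (Real.exp y - Real.exp (-y)) / 2 := funext Real.sinh_eq
  rw [h]
  exact ((analyticAt_rexp).sub ((analyticAt_rexp).comp ((analyticAt_id).neg))).div
    analyticAt_const two_ne_zero

lemma analyticAt_cosh' (x : ℝ) : AnalyticAt ℝ Real.cosh x := by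
  have h : Real.cosh = fun y => (Real.exp y + Real.exp (-y)) / 2 := funext Real.cosh_eq
  rw [h]
  exact ((analyticAt_rexp).add ((analyticAt_rexp).comp ((analyticAt_id).neg))).div
    analyticAt_const two_ne_zero

lemma shc_of_ne {y : ℝ} (hy : y ≠ 0) : shc y = Real.sinh y / y := by
  rw [shc, dslope_of_ne _ hy, slope_def_field, Real.sinh_zero, sub_zero, sub_zero]

lemma shc_zero : shc 0 = 1 := by
  rw [shc, dslope_same, Real.deriv_sinh, Real.cosh_zero]

lemma shc_pos (y : ℝ) : 0 < shc y := by
  rcases eq_or_ne y 0 with rfl | hy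
  · rw [shc_zero]; norm_num
  · rw [shc_of_ne hy]
    rcases hy.lt_or_gt with h | h
    · have hs : Real.sinh y < 0 := by simpa using Real.sinh_lt_sinh.2 h
      exact div_pos_of_neg_of_neg hs h
    · exact div_pos (by simpa using Real.sinh_lt_sinh.2 h) h

lemma analyticAt_shc (x : ℝ) : AnalyticAt ℝ shc x := by
  rcases eq_or_ne x 0 with rfl | hx
  · obtain ⟨p, hp⟩ := analyticAt_sinh' 0
    exact ⟨p.fslope, hp.has_fpower_series_dslope_fslope⟩
  · have h1 : AnalyticAt ℝ (fun y => Real.sinh y / y) x :=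
      (analyticAt_sinh' x).div analyticAt_id hx
    apply h1.congr
    filter_upwards [isOpen_compl_singleton.mem_nhds hx] with y hy
    exact (shc_of_ne hy).symm

/-- analytic extension of `k ↦ k * coth (k*c)` -/
noncomputable def kcoth (c k : ℝ) : ℝ := Real.cosh (k * c) / (c * shc (k * c))
/-- analytic extension of `k ↦ k * csch (k*c)` -/
noncomputable def kcsch (c k : ℝ) : ℝ := 1 / (c * shc (k * c))

lemma kdenom_pos {c : ℝ} (hc : 0 < c) (k : ℝ) : 0 < c * shc (k * c) :=
  mul_pos hc (shc_pos _)

lemma analyticAt_kcoth {c : ℝ} (hc : 0 < c) (x : ℝ) :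
    AnalyticAt ℝ (fun k => kcoth c k) x := by
  have hlin : AnalyticAt ℝ (fun k : ℝ => k * c) x := (analyticAt_id).mul analyticAt_const
  exact ((analyticAt_cosh' _).comp hlin).div
    (analyticAt_const.mul ((analyticAt_shc _).comp hlin)) (kdenom_pos hc x).ne'

lemma analyticAt_kcsch {c : ℝ} (hc : 0 < c) (x : ℝ) :
    AnalyticAt ℝ (fun k => kcsch c k) x := by
  have hlin : AnalyticAt ℝ (fun k : ℝ => k * c) x := (analyticAt_id).mul analyticAt_const
  exact analyticAt_const.div
    (analyticAt_const.mul ((analyticAt_shc _).comp hlin)) (kdenom_pos hc x).ne'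

lemma sinh_arg_ne {c k : ℝ} (hc : 0 < c) (hk : k ≠ 0) : Real.sinh (k * c) ≠ 0 := by
  intro h
  have := Real.sinh_lt_sinh (x := 0) (y := k * c)
  rcases hk.lt_or_gt with h' | h'
  · have : Real.sinh (k * c) < 0 := by
      simpa using Real.sinh_lt_sinh.2 (mul_neg_of_neg_of_pos h' hc)
    exact this.ne h
  · have : 0 < Real.sinh (k * c) := by
      simpa using Real.sinh_lt_sinh.2 (mul_pos h' hc)
    exact this.ne' h

lemma kcoth_eq {c k : ℝ} (hc : 0 < c) (hk : k ≠ 0) : kcoth c k = k * coth (k * c) := by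
  have hs := sinh_arg_ne hc hk
  rw [kcoth, coth, shc_of_ne (mul_ne_zero hk hc.ne')]
  field_simp

lemma kcsch_eq {c k : ℝ} (hc : 0 < c) (hk : k ≠ 0) : kcsch c k = k * csch (k * c) := by
  have hs := sinh_arg_ne hc hk
  rw [kcsch, csch, shc_of_ne (mul_ne_zero hk hc.ne')]
  field_simp

lemma kcsch_pos {c : ℝ} (hc : 0 < c) (k : ℝ) : 0 < kcsch c k :=
  div_pos one_pos (kdenom_pos hc k)

lemma kcoth_sub_kcsch_nonneg {c : ℝ} (hc : 0 < c) (k : ℝ) : 0 ≤ kcoth c k - kcsch c k := by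
  rw [kcoth, kcsch, div_sub_div_same]
  exact div_nonneg (sub_nonneg.2 (Real.one_le_cosh _)) (kdenom_pos hc k).le

open Matrix

section Matrices

variable (n : ℕ) (Δh U : ℕ → ℝ)

/-- analytic extension of `k² A(k)` -/
noncomputable def Atm (k : ℝ) : Matrix (Fin n) (Fin n) ℝ :=
  fun i j =>
    if (i : ℕ) = (j : ℕ) then k ^ 2 + kcoth (Δh (i : ℕ)) k + kcoth (Δh ((i : ℕ) + 1)) k
    else if (i : ℕ) + 1 = (j : ℕ) then -(kcsch (Δh ((i : ℕ) + 1)) k)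
    else if (j : ℕ) + 1 = (i : ℕ) then -(kcsch (Δh ((j : ℕ) + 1)) k)
    else 0

/-- analytic extension of `k B(k)` -/
noncomputable def Btm (k : ℝ) : Matrix (Fin n) (Fin n) ℝ :=
  fun i j =>
    if (i : ℕ) = (j : ℕ) then
      U (i : ℕ) ^ 2 * kcoth (Δh (i : ℕ)) k + U ((i : ℕ) + 1) ^ 2 * kcoth (Δh ((i : ℕ) + 1)) k
    else if (i : ℕ) + 1 = (j : ℕ) then -(U ((i : ℕ) + 1) ^ 2 * kcsch (Δh ((i : ℕ) + 1)) k)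
    else if (j : ℕ) + 1 = (i : ℕ) then -(U ((j : ℕ) + 1) ^ 2 * kcsch (Δh ((j : ℕ) + 1)) k)
    else 0

/-- analytic extension of `k C(k)` -/
noncomputable def Ctm (k : ℝ) : Matrix (Fin n) (Fin n) ℝ :=
  fun i j =>
    if (i : ℕ) = (j : ℕ) then
      U (i : ℕ) * kcoth (Δh (i : ℕ)) k + U ((i : ℕ) + 1) * kcoth (Δh ((i : ℕ) + 1)) k
    else if (i : ℕ) + 1 = (j : ℕ) then -(U ((i : ℕ) + 1) * kcsch (Δh ((i : ℕ) + 1)) k)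
    else if (j : ℕ) + 1 = (i : ℕ) then -(U ((j : ℕ) + 1) * kcsch (Δh ((j : ℕ) + 1)) k)
    else 0

variable {n Δh U}

lemma Atm_eq (hΔh : ∀ i ≤ n, 0 < Δh i) {k : ℝ} (hk : k ≠ 0) :
    Atm n Δh k = k ^ 2 • Amat n Δh k := by
  ext i j
  have h1 : 0 < Δh (i : ℕ) := hΔh _ i.isLt.le
  have h2 : 0 < Δh ((i : ℕ) + 1) := hΔh _ i.isLt
  have h3 : 0 < Δh ((j : ℕ) + 1) := hΔh _ j.isLt
  simp only [Atm, Amat, Matrix.smul_apply, smul_eq_mul]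
  split_ifs with hij hij2 hij3
  · rw [kcoth_eq h1 hk, kcoth_eq h2 hk]
    field_simp
  · rw [kcsch_eq h2 hk]
    field_simp
  · rw [kcsch_eq h3 hk]
    field_simp
  · ring

lemma Btm_eq (hΔh : ∀ i ≤ n, 0 < Δh i) {k : ℝ} (hk : k ≠ 0) :
    Btm n Δh U k = k • Bmat n Δh U k := by
  ext i j
  have h1 : 0 < Δh (i : ℕ) := hΔh _ i.isLt.le
  have h2 : 0 < Δh ((i : ℕ) + 1) := hΔh _ i.isLt
  have h3 : 0 < Δh ((j : ℕ) + 1) := hΔh _ j.isLt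
  simp only [Btm, Bmat, Matrix.smul_apply, smul_eq_mul]
  split_ifs with hij hij2 hij3
  · rw [kcoth_eq h1 hk, kcoth_eq h2 hk]
    ring
  · rw [kcsch_eq h2 hk]
    ring
  · rw [kcsch_eq h3 hk]
    ring
  · ring

lemma Ctm_eq (hΔh : ∀ i ≤ n, 0 < Δh i) {k : ℝ} (hk : k ≠ 0) :
    Ctm n Δh U k = k • Cmat n Δh U k := by
  ext i j
  have h1 : 0 < Δh (i : ℕ) := hΔh _ i.isLt.le
  have h2 : 0 < Δh ((i : ℕ) + 1) := hΔh _ i.isLt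
  have h3 : 0 < Δh ((j : ℕ) + 1) := hΔh _ j.isLt
  simp only [Ctm, Cmat, Matrix.smul_apply, smul_eq_mul]
  split_ifs with hij hij2 hij3
  · rw [kcoth_eq h1 hk, kcoth_eq h2 hk]
    ring
  · rw [kcsch_eq h2 hk]
    ring
  · rw [kcsch_eq h3 hk]
    ring
  · ring

lemma analyticAt_ite {p : Prop} [Decidable p] {f g : ℝ → ℝ} {x : ℝ}
    (hf : AnalyticAt ℝ f x) (hg : AnalyticAt ℝ g x) :
    AnalyticAt ℝ (fun k => if p then f k else g k) x := by
  by_cases h : p <;> simp only [h, if_true, if_false] <;> assumption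

lemma analyticAt_Atm (hΔh : ∀ i ≤ n, 0 < Δh i) (i j : Fin n) (x : ℝ) :
    AnalyticAt ℝ (fun k => Atm n Δh k i j) x := by
  have h1 : 0 < Δh (i : ℕ) := hΔh _ i.isLt.le
  have h2 : 0 < Δh ((i : ℕ) + 1) := hΔh _ i.isLt
  have h3 : 0 < Δh ((j : ℕ) + 1) := hΔh _ j.isLt
  exact analyticAt_ite
    ((((analyticAt_id).pow 2).add (analyticAt_kcoth h1 x)).add (analyticAt_kcoth h2 x))
    (analyticAt_ite (analyticAt_kcsch h2 x).neg
      (analyticAt_ite (analyticAt_kcsch h3 x).neg analyticAt_const))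

lemma analyticAt_Btm (hΔh : ∀ i ≤ n, 0 < Δh i) (i j : Fin n) (x : ℝ) :
    AnalyticAt ℝ (fun k => Btm n Δh U k i j) x := by
  have h1 : 0 < Δh (i : ℕ) := hΔh _ i.isLt.le
  have h2 : 0 < Δh ((i : ℕ) + 1) := hΔh _ i.isLt
  have h3 : 0 < Δh ((j : ℕ) + 1) := hΔh _ j.isLt
  exact analyticAt_ite
    ((analyticAt_const.mul (analyticAt_kcoth h1 x)).add
      (analyticAt_const.mul (analyticAt_kcoth h2 x)))
    (analyticAt_ite (analyticAt_const.mul (analyticAt_kcsch h2 x)).neg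
      (analyticAt_ite (analyticAt_const.mul (analyticAt_kcsch h3 x)).neg analyticAt_const))

lemma analyticAt_Ctm (hΔh : ∀ i ≤ n, 0 < Δh i) (i j : Fin n) (x : ℝ) :
    AnalyticAt ℝ (fun k => Ctm n Δh U k i j) x := by
  have h1 : 0 < Δh (i : ℕ) := hΔh _ i.isLt.le
  have h2 : 0 < Δh ((i : ℕ) + 1) := hΔh _ i.isLt
  have h3 : 0 < Δh ((j : ℕ) + 1) := hΔh _ j.isLt
  exact analyticAt_ite
    ((analyticAt_const.mul (analyticAt_kcoth h1 x)).add
      (analyticAt_const.mul (analyticAt_kcoth h2 x)))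
    (analyticAt_ite (analyticAt_const.mul (analyticAt_kcsch h2 x)).neg
      (analyticAt_ite (analyticAt_const.mul (analyticAt_kcsch h3 x)).neg analyticAt_const))

end Matrices

section PosDefPart

variable {n : ℕ} {Δh : ℕ → ℝ}

/-- difference matrix -/
noncomputable def Lmat (n : ℕ) : Matrix (Fin (n + 1)) (Fin n) ℝ :=
  fun m i => (if m = Fin.castSucc i then 1 else 0) - (if m = Fin.succ i then 1 else 0)

lemma At_decomp (n : ℕ) (Δh : ℕ → ℝ) (k : ℝ) :
    Atm n Δh k =
      k ^ 2 • (1 : Matrix (Fin n) (Fin n) ℝ) +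
        (Lmat n)ᵀ * Matrix.diagonal (fun m : Fin (n + 1) => kcsch (Δh (m : ℕ)) k) * Lmat n +
        Matrix.diagonal (fun i : Fin n =>
          (kcoth (Δh (i : ℕ)) k - kcsch (Δh (i : ℕ)) k) +
            (kcoth (Δh ((i : ℕ) + 1)) k - kcsch (Δh ((i : ℕ) + 1)) k)) := by
  ext i j
  set d : Fin (n + 1) → ℝ := fun m => kcsch (Δh (m : ℕ)) k with hd
  have hmid : ((Lmat n)ᵀ * Matrix.diagonal d * Lmat n) i j =
      d (Fin.castSucc i) * Lmat n (Fin.castSucc i) j - d (Fin.succ i) * Lmat n (Fin.succ i) j := by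
    rw [Matrix.mul_assoc, Matrix.mul_apply]
    have : ∀ m : Fin (n + 1), (Lmat n)ᵀ i m * (Matrix.diagonal d * Lmat n) m j =
        (if m = Fin.castSucc i then d m * Lmat n m j else 0) -
          (if m = Fin.succ i then d m * Lmat n m j else 0) := by
      intro m
      rw [Matrix.transpose_apply, Matrix.diagonal_mul]
      show ((if m = Fin.castSucc i then (1:ℝ) else 0) - (if m = Fin.succ i then 1 else 0)) *
        (d m * Lmat n m j) = _
      rw [sub_mul, ite_mul, ite_mul, one_mul, zero_mul]
    simp only [this, Finset.sum_sub_distrib, Finset.sum_ite_eq', Finset.mem_univ, if_true]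
  simp only [Matrix.add_apply, Matrix.smul_apply, smul_eq_mul, hmid]
  have hcc : ∀ a b : Fin n, (Fin.castSucc a = Fin.castSucc b) ↔ (a : ℕ) = (b : ℕ) := by
    intro a b; rw [Fin.castSucc_inj, Fin.ext_iff]
  have hcs : ∀ a b : Fin n, (Fin.castSucc a = Fin.succ b) ↔ (a : ℕ) = (b : ℕ) + 1 := by
    intro a b; rw [Fin.ext_iff]; simp
  have hsc : ∀ a b : Fin n, (Fin.succ a = Fin.castSucc b) ↔ (a : ℕ) + 1 = (b : ℕ) := by
    intro a b; rw [Fin.ext_iff]; simp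
  have hss : ∀ a b : Fin n, (Fin.succ a = Fin.succ b) ↔ (a : ℕ) = (b : ℕ) := by
    intro a b; rw [Fin.succ_inj, Fin.ext_iff]
  have hdc : d (Fin.castSucc i) = kcsch (Δh (i : ℕ)) k := by simp [hd]
  have hdsu : d (Fin.succ i) = kcsch (Δh ((i : ℕ) + 1)) k := by simp [hd]
  simp only [Atm, Lmat, hcc, hcs, hsc, hss, hdc, hdsu, Matrix.one_apply, Matrix.diagonal_apply,
    Fin.ext_iff]
  split_ifs with h1 h2 h3 h4 h5 h6 h7 h8 h9 h10 <;>
    first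
      | ring1
      | (exfalso; omega)
      | (simp only [h8]; ring1)
      | (simp only [show (i : ℕ) = (j : ℕ) + 1 by omega]; ring1)

end PosDefPart
section Inj

variable {n : ℕ} {Δh : ℕ → ℝ}

lemma sum_castSucc_eq (x : Fin n → ℝ) (m : Fin (n + 1)) (h : (m : ℕ) < n) :
    (∑ i, if m = Fin.castSucc i then x i else 0) = x ⟨(m : ℕ), h⟩ := by
  rw [Finset.sum_eq_single (⟨(m : ℕ), h⟩ : Fin n)]
  · rw [if_pos (Fin.ext (by simp))]
  · intro b _ hb
    rw [if_neg]
    intro he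
    exact hb (Fin.ext (by simpa using (congrArg Fin.val he).symm))
  · simp

lemma sum_succ_eq (x : Fin n → ℝ) (m : Fin (n + 1)) (w : ℕ) (hw : w < n)
    (hm : (m : ℕ) = w + 1) :
    (∑ i, if m = Fin.succ i then x i else 0) = x ⟨w, hw⟩ := by
  rw [Finset.sum_eq_single (⟨w, hw⟩ : Fin n)]
  · rw [if_pos (Fin.ext (by simp [hm]))]
  · intro b _ hb
    rw [if_neg]
    intro he
    apply hb
    have hv2 := congrArg Fin.val he
    simp only [Fin.val_succ, hm] at hv2
    exact Fin.ext (show (b : ℕ) = w by omega)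
  · simp

lemma sum_succ_zero (x : Fin n → ℝ) (m : Fin (n + 1)) (hm : (m : ℕ) = 0) :
    (∑ i, if m = Fin.succ i then x i else 0) = 0 := by
  apply Finset.sum_eq_zero
  intro i _
  rw [if_neg]
  intro he
  have := congrArg Fin.val he
  simp [hm] at this

lemma mulVec_Lmat (x : Fin n → ℝ) (m : Fin (n + 1)) :
    (Lmat n *ᵥ x) m =
      (∑ i, if m = Fin.castSucc i then x i else 0) -
        (∑ i, if m = Fin.succ i then x i else 0) := by
  simp [Matrix.mulVec, dotProduct, Lmat, sub_mul, ite_mul, Finset.sum_sub_distrib]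

lemma Lmat_inj {x : Fin n → ℝ} (h : Lmat n *ᵥ x = 0) : x = 0 := by
  suffices H : ∀ v (hv : v < n), x ⟨v, hv⟩ = 0 by
    funext i
    have := H (i : ℕ) i.isLt
    simpa using this
  intro v
  induction v with
  | zero =>
    intro hv
    have h0 := congrFun h ⟨0, by omega⟩
    rw [mulVec_Lmat, sum_succ_zero x _ rfl, sum_castSucc_eq x _ (by simpa using hv)] at h0
    simpa using h0
  | succ w ih =>
    intro hv
    have h0 := congrFun h ⟨w + 1, by omega⟩
    rw [mulVec_Lmat, sum_succ_eq x _ w (by omega) rfl,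
      sum_castSucc_eq x _ (by simpa using hv)] at h0
    have hw := ih (by omega)
    simp only [Pi.zero_apply, hw, sub_zero] at h0
    exact h0

end Inj
section Pos

variable {n : ℕ} {Δh : ℕ → ℝ}

lemma dotProduct_Atm_pos (hΔh : ∀ i ≤ n, 0 < Δh i) (k : ℝ) {x : Fin n → ℝ} (hx : x ≠ 0) :
    0 < x ⬝ᵥ (Atm n Δh k *ᵥ x) := by
  have hΔ : ∀ m : Fin (n + 1), 0 < Δh (m : ℕ) := fun m => hΔh _ (by omega)
  rw [At_decomp]
  rw [Matrix.add_mulVec, Matrix.add_mulVec, dotProduct_add, dotProduct_add]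
  set d : Fin (n + 1) → ℝ := fun m => kcsch (Δh (m : ℕ)) k with hd
  set e : Fin n → ℝ := fun i =>
    (kcoth (Δh (i : ℕ)) k - kcsch (Δh (i : ℕ)) k) +
      (kcoth (Δh ((i : ℕ) + 1)) k - kcsch (Δh ((i : ℕ) + 1)) k) with he
  have henn : ∀ i : Fin n, 0 ≤ e i := fun i =>
    add_nonneg (kcoth_sub_kcsch_nonneg (hΔh _ i.isLt.le) k)
      (kcoth_sub_kcsch_nonneg (hΔh _ i.isLt) k)
  have hT1 : x ⬝ᵥ ((k ^ 2 • (1 : Matrix (Fin n) (Fin n) ℝ)) *ᵥ x) = k ^ 2 * ∑ i, x i ^ 2 := by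
    rw [Matrix.smul_mulVec, Matrix.one_mulVec, dotProduct_smul, smul_eq_mul]
    congr 1
    simp [dotProduct, sq]
  have hT2 : x ⬝ᵥ (((Lmat n)ᵀ * Matrix.diagonal d * Lmat n) *ᵥ x) =
      ∑ m, d m * ((Lmat n *ᵥ x) m) ^ 2 := by
    rw [← Matrix.mulVec_mulVec, ← Matrix.mulVec_mulVec, Matrix.dotProduct_mulVec,
      Matrix.vecMul_transpose]
    simp [dotProduct, Matrix.mulVec_diagonal, sq]
    apply Finset.sum_congr rfl
    intro m _
    ring
  have hT3 : x ⬝ᵥ (Matrix.diagonal e *ᵥ x) = ∑ i, e i * x i ^ 2 := by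
    simp [dotProduct, Matrix.mulVec_diagonal, sq]
    apply Finset.sum_congr rfl
    intro m _
    ring
  rw [hT1, hT2, hT3]
  have h3 : 0 ≤ ∑ i, e i * x i ^ 2 :=
    Finset.sum_nonneg fun i _ => mul_nonneg (henn i) (sq_nonneg _)
  have h2 : 0 ≤ ∑ m, d m * ((Lmat n *ᵥ x) m) ^ 2 :=
    Finset.sum_nonneg fun m _ => mul_nonneg (kcsch_pos (hΔ m) k).le (sq_nonneg _)
  rcases eq_or_ne k 0 with rfl | hk
  · have hL : Lmat n *ᵥ x ≠ 0 := fun hc => hx (Lmat_inj hc)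
    obtain ⟨m, hm⟩ := Function.ne_iff.mp hL
    have hpos : 0 < ∑ m, d m * ((Lmat n *ᵥ x) m) ^ 2 :=
      Finset.sum_pos' (fun m _ => mul_nonneg (kcsch_pos (hΔ m) 0).le (sq_nonneg _))
        ⟨m, Finset.mem_univ m, mul_pos (kcsch_pos (hΔ m) 0) (lt_of_le_of_ne (sq_nonneg _) (Ne.symm (pow_ne_zero 2 hm)))⟩
    have h1 : (0:ℝ) ^ 2 * ∑ i, x i ^ 2 = 0 := by simp
    rw [h1]
    linarith
  · obtain ⟨i, hi⟩ := Function.ne_iff.mp hx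
    have h1 : 0 < k ^ 2 * ∑ i, x i ^ 2 := by
      apply mul_pos (by positivity)
      exact Finset.sum_pos' (fun i _ => sq_nonneg _) ⟨i, Finset.mem_univ i, lt_of_le_of_ne (sq_nonneg _) (Ne.symm (pow_ne_zero 2 hi))⟩
    linarith

lemma det_Atm_ne_zero (hΔh : ∀ i ≤ n, 0 < Δh i) (k : ℝ) : (Atm n Δh k).det ≠ 0 := by
  intro h
  obtain ⟨v, hv, hmv⟩ := Matrix.exists_mulVec_eq_zero_iff.mpr h
  have := dotProduct_Atm_pos hΔh k hv
  rw [hmv, dotProduct_zero] at this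
  exact lt_irrefl 0 this

end Pos
section InvAnalytic

lemma analyticAt_finset_det {m : ℕ} {A : ℝ → Matrix (Fin m) (Fin m) ℝ} {x : ℝ}
    (hA : ∀ i j, AnalyticAt ℝ (fun k => A k i j) x) :
    AnalyticAt ℝ (fun k => (A k).det) x := by
  simp only [Matrix.det_apply]
  apply Finset.analyticAt_fun_sum
  intro σ _
  simp only [Units.smul_def, zsmul_eq_mul]
  exact analyticAt_const.mul (Finset.analyticAt_fun_prod _ (fun i _ => hA _ _))

lemma analyticAt_inv_entry {m : ℕ} {A : ℝ → Matrix (Fin m) (Fin m) ℝ} {x : ℝ}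
    (hA : ∀ i j, AnalyticAt ℝ (fun k => A k i j) x)
    (hdet : (A x).det ≠ 0) (i j : Fin m) :
    AnalyticAt ℝ (fun k => (A k)⁻¹ i j) x := by
  have heq : (fun k => (A k)⁻¹ i j) = fun k => ((A k).det)⁻¹ * (A k).adjugate i j := by
    funext k
    rw [Matrix.inv_def, Matrix.smul_apply, smul_eq_mul, Ring.inverse_eq_inv']
  rw [heq]
  apply ((analyticAt_finset_det hA).inv hdet).mul
  have h2 : (fun k => (A k).adjugate i j) =
      fun k => ((A k).updateRow j (Pi.single i 1)).det := by
    funext k; rw [Matrix.adjugate_apply]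
  rw [h2]
  apply analyticAt_finset_det
  intro a b
  simp only [Matrix.updateRow_apply]
  exact analyticAt_ite analyticAt_const (hA a b)

end InvAnalytic
lemma analyticAt_ofReal_comp {f : ℝ → ℝ} {x : ℝ} (hf : AnalyticAt ℝ f x) :
    AnalyticAt ℝ (fun k => ((f k : ℝ) : ℂ)) x := by
  have h := (Complex.ofRealCLM.analyticAt (f x)).comp hf
  exact h

/-- the matrix `M(k)` extends to a matrix-valued function of `k ∈ ℝ` each of
whose entries is real-analytic on all of `ℝ`, agreeing with `M(k)` for every `k ≠ 0`. -/
theorem statement19 (n : ℕ) (hn : 1 ≤ n) (Δh U : ℕ → ℝ) (hΔh : ∀ i ≤ n, 0 < Δh i) :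
    ∃ Mt : ℝ → Matrix (Fin n ⊕ Fin n) (Fin n ⊕ Fin n) ℂ,
      (∀ (i j : Fin n ⊕ Fin n) (x : ℝ), AnalyticAt ℝ (fun k : ℝ => Mt k i j) x) ∧
      ∀ k : ℝ, k ≠ 0 → Mt k = Mmat n Δh U k := by
  refine ⟨fun k => Matrix.fromBlocks 0 1
      (((Atm n Δh k)⁻¹ *
          (k ^ 2 • Btm n Δh U k - k ^ 6 • (1 : Matrix (Fin n) (Fin n) ℝ))).map
        (fun x : ℝ => (x : ℂ)))
      ((-2 * Complex.I) •
        ((Atm n Δh k)⁻¹ * (k • Ctm n Δh U k)).map (fun x : ℝ => (x : ℂ))), ?_, ?_⟩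
  · intro i j x
    have hAinv : ∀ a b : Fin n, AnalyticAt ℝ (fun k => (Atm n Δh k)⁻¹ a b) x :=
      fun a b => analyticAt_inv_entry (fun a b => analyticAt_Atm hΔh a b x)
        (det_Atm_ne_zero hΔh x) a b
    have hblock21 : ∀ a b : Fin n, AnalyticAt ℝ
        (fun k => ((Atm n Δh k)⁻¹ *
          (k ^ 2 • Btm n Δh U k - k ^ 6 • (1 : Matrix (Fin n) (Fin n) ℝ))) a b) x := by
      intro a b
      simp only [Matrix.mul_apply, Matrix.sub_apply, Matrix.smul_apply, smul_eq_mul]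
      apply Finset.analyticAt_fun_sum
      intro l _
      exact (hAinv a l).mul
        ((((analyticAt_id).pow 2).mul (analyticAt_Btm hΔh l b x)).sub
          (((analyticAt_id).pow 6).mul analyticAt_const))
    have hblock22 : ∀ a b : Fin n, AnalyticAt ℝ
        (fun k => ((Atm n Δh k)⁻¹ * (k • Ctm n Δh U k)) a b) x := by
      intro a b
      simp only [Matrix.mul_apply, Matrix.smul_apply, smul_eq_mul]
      apply Finset.analyticAt_fun_sum
      intro l _
      exact (hAinv a l).mul ((analyticAt_id).mul (analyticAt_Ctm hΔh l b x))
    cases i with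
    | inl a =>
      cases j with
      | inl b =>
        simp only [Matrix.fromBlocks_apply₁₁, Matrix.zero_apply]
        exact analyticAt_const
      | inr b =>
        simp only [Matrix.fromBlocks_apply₁₂]
        exact analyticAt_const
    | inr a =>
      cases j with
      | inl b =>
        simp only [Matrix.fromBlocks_apply₂₁, Matrix.map_apply]
        exact analyticAt_ofReal_comp (hblock21 a b)
      | inr b =>
        simp only [Matrix.fromBlocks_apply₂₂, Matrix.smul_apply, Matrix.map_apply,
          smul_eq_mul]
        exact analyticAt_const.mul (analyticAt_ofReal_comp (hblock22 a b))
  · intro k hk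
    have hdet := det_Atm_ne_zero hΔh k
    have hA := Atm_eq hΔh hk
    have hB := Btm_eq (U := U) hΔh hk
    have hC := Ctm_eq (U := U) hΔh hk
    have hk2 : (k ^ 2 : ℝ) ≠ 0 := pow_ne_zero 2 hk
    have hAinv : (Amat n Δh k)⁻¹ = k ^ 2 • (Atm n Δh k)⁻¹ := by
      apply Matrix.inv_eq_right_inv
      have h1 : Amat n Δh k = (k ^ 2)⁻¹ • Atm n Δh k := by
        rw [hA, smul_smul, inv_mul_cancel₀ hk2, one_smul]
      rw [h1, Matrix.smul_mul, Matrix.mul_smul, smul_smul, inv_mul_cancel₀ hk2, one_smul,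
        Matrix.mul_nonsing_inv _ (Ne.isUnit hdet)]
    have hX : k ^ 2 • (k • Bmat n Δh U k - k ^ 4 • (1 : Matrix (Fin n) (Fin n) ℝ)) =
        k ^ 2 • Btm n Δh U k - k ^ 6 • (1 : Matrix (Fin n) (Fin n) ℝ) := by
      ext i j
      simp only [hB, Matrix.sub_apply, Matrix.smul_apply, smul_eq_mul]
      ring
    have h21 : (Amat n Δh k)⁻¹ *
        (k • Bmat n Δh U k - k ^ 4 • (1 : Matrix (Fin n) (Fin n) ℝ)) =
        (Atm n Δh k)⁻¹ * (k ^ 2 • Btm n Δh U k - k ^ 6 • (1 : Matrix (Fin n) (Fin n) ℝ)) := by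
      rw [hAinv, Matrix.smul_mul, ← Matrix.mul_smul, hX]
    have hX2 : k • Ctm n Δh U k = k ^ 2 • Cmat n Δh U k := by
      rw [hC, smul_smul, ← pow_two]
    have h22 : (Amat n Δh k)⁻¹ * Cmat n Δh U k =
        (Atm n Δh k)⁻¹ * (k • Ctm n Δh U k) := by
      rw [hX2, hAinv, Matrix.smul_mul, ← Matrix.mul_smul]
    show _ = Mmat n Δh U k
    rw [Mmat, h21, h22]
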